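/- Let K be a field, S a K-vector space, and ω an alternating bilinear form on S. Let W ⊆ V ⊆ S be linear subspaces with W coisotropic (W^⊥ ⊆ W), so that V^⊥ ⊆ W^⊥ ⊆ W ⊆ V. Then: (i) the formula ω̄(v + V^⊥, v' + V^⊥) = ω(v, v') defines a well-defined alternating bilinear form on the quotient V / V^⊥; (ii) the ω̄-orthogonal in V / V^⊥ of the image W/V^⊥ of W equals the image W^⊥/V^⊥ of W^⊥, so in particular W/V^⊥ is coisotropic in (V/V^⊥, ω̄); and (iii) there is a linear isomorphism between W / W^⊥ and (W/V^⊥) / (W^⊥/V^⊥). -/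
import Mathlib


/-- The `ω`-orthogonal of a submodule, as a submodule. -/
def omegaOrthSub {K S : Type*} [Field K] [AddCommGroup S] [Module K S]
    (ω : S →ₗ[K] S →ₗ[K] K) (A : Submodule K S) : Submodule K S where
  carrier := {s | ∀ a ∈ A, ω s a = 0}
  add_mem' hx hy := fun a ha => by simp [hx a ha, hy a ha]
  zero_mem' := fun a ha => by simp
  smul_mem' c x hx := fun a ha => by simp [hx a ha]

lemma omega_antisymm {K S : Type*} [Field K] [AddCommGroup S] [Module K S]
    (ω : S →ₗ[K] S →ₗ[K] K) (halt : ∀ s : S, ω s s = 0) (a b : S) :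
    ω a b = - ω b a := by
  have h := halt (a + b)
  simp only [map_add, LinearMap.add_apply, halt a, halt b] at h
  linear_combination h

set_option maxHeartbeats 1000000 in
/-- Parts (2) and (3) of the paper's "Reduction in stages" Lemma: `ω` descends to a
well-defined alternating bilinear form `ω̄` on `V/V^⊥`; the `ω̄`-orthogonal of `W/V^⊥`
is `W^⊥/V^⊥` (so `W/V^⊥` is coisotropic); and `W/W^⊥ ≅ (W/V^⊥)/(W^⊥/V^⊥)`
canonically. -/
theorem reduction_in_stages_two_three
    (K S : Type*) [Field K] [AddCommGroup S] [Module K S]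
    (ω : S →ₗ[K] S →ₗ[K] K) (halt : ∀ s : S, ω s s = 0)
    (V W : Submodule K S) (hWV : W ≤ V)
    (hW : omegaOrthSub ω W ≤ W)
    (hVpV : omegaOrthSub ω V ≤ V) (hVpWp : omegaOrthSub ω V ≤ omegaOrthSub ω W) :
    ∃ ωbar : (↥V ⧸ (omegaOrthSub ω V).comap V.subtype) →ₗ[K]
             (↥V ⧸ (omegaOrthSub ω V).comap V.subtype) →ₗ[K] K,
      -- (i) well-definedness: `ω̄(v + V^⊥, v' + V^⊥) = ω(v,v')`, and `ω̄` is alternating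
      (∀ v v' : ↥V, ωbar (Submodule.Quotient.mk v) (Submodule.Quotient.mk v') =
        ω (v : S) (v' : S)) ∧
      (∀ q, ωbar q q = 0) ∧
      -- (ii) the `ω̄`-orthogonal of `W/V^⊥` in `V/V^⊥` is `W^⊥/V^⊥`
      {q | ∀ p ∈ (W.comap V.subtype).map ((omegaOrthSub ω V).comap V.subtype).mkQ,
          ωbar q p = 0} =
        ((((omegaOrthSub ω W).comap V.subtype).map
            ((omegaOrthSub ω V).comap V.subtype).mkQ : Submodule K _) : Set _) ∧
      -- (iii) `W/W^⊥` is canonically isomorphic to `(W/V^⊥)/(W^⊥/V^⊥)`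
      ∃ e : (↥W ⧸ (omegaOrthSub ω W).comap W.subtype) ≃ₗ[K]
          (↥((W.comap V.subtype).map ((omegaOrthSub ω V).comap V.subtype).mkQ) ⧸
            ((((omegaOrthSub ω W).comap V.subtype).map
                ((omegaOrthSub ω V).comap V.subtype).mkQ).comap
              ((W.comap V.subtype).map
                ((omegaOrthSub ω V).comap V.subtype).mkQ).subtype)),
        ∀ w : ↥W,
          e (Submodule.Quotient.mk w) =
            Submodule.Quotient.mk
              ⟨((omegaOrthSub ω V).comap V.subtype).mkQ ⟨(w : S), hWV w.2⟩,
                Submodule.mem_map_of_mem (show (⟨(w : S), hWV w.2⟩ : ↥V) ∈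
                  W.comap V.subtype from w.2)⟩ := by
  classical
  set Vq : Submodule K ↥V := (omegaOrthSub ω V).comap V.subtype with hVq
  -- restricted bilinear form on V
  set ωV : ↥V →ₗ[K] ↥V →ₗ[K] K := ω.compl₁₂ V.subtype V.subtype with hωV
  have hωVapp : ∀ v v' : ↥V, ωV v v' = ω (v : S) (v' : S) := fun v v' => rfl
  -- lift first argument
  have h1 : Vq ≤ LinearMap.ker ωV := by
    intro v hv
    rw [LinearMap.mem_ker]
    exact LinearMap.ext fun v' => hv (v' : S) v'.2
  set A : (↥V ⧸ Vq) →ₗ[K] ↥V →ₗ[K] K := Vq.liftQ ωV h1 with hA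
  have h2 : Vq ≤ LinearMap.ker A.flip := by
    intro v hv
    have : ∀ q : ↥V ⧸ Vq, A.flip v q = 0 := by
      intro q
      obtain ⟨v', rfl⟩ := Submodule.Quotient.mk_surjective _ q
      show A (Submodule.Quotient.mk v') v = 0
      rw [hA, Submodule.liftQ_apply]
      rw [hωVapp, omega_antisymm ω halt]
      rw [neg_eq_zero]
      exact hv (v' : S) v'.2
    rw [LinearMap.mem_ker]
    exact LinearMap.ext this
  set B : (↥V ⧸ Vq) →ₗ[K] (↥V ⧸ Vq) →ₗ[K] K := Vq.liftQ A.flip h2 with hB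
  refine ⟨B.flip, ?_, ?_, ?_, ?_⟩
  · intro v v'
    show B (Submodule.Quotient.mk v') (Submodule.Quotient.mk v) = _
    rw [hB, Submodule.liftQ_apply]
    rfl
  · intro q
    obtain ⟨v, rfl⟩ := Submodule.Quotient.mk_surjective _ q
    show B (Submodule.Quotient.mk v) (Submodule.Quotient.mk v) = 0
    rw [hB, Submodule.liftQ_apply]
    exact halt (v : S)
  · -- part (ii)
    ext q
    obtain ⟨v, rfl⟩ := Submodule.Quotient.mk_surjective _ q
    constructor
    · intro hq
      refine ⟨v, ?_, rfl⟩
      intro a ha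
      have := hq (Submodule.Quotient.mk (⟨a, hWV ha⟩ : ↥V))
        ⟨⟨a, hWV ha⟩, ha, rfl⟩
      exact this
    · rintro ⟨u, hu, huq⟩ p hp
      obtain ⟨w, hw, rfl⟩ := hp
      rw [← huq]
      show B (Submodule.Quotient.mk w) (Submodule.Quotient.mk u) = 0
      rw [hB, Submodule.liftQ_apply]
      show A (Submodule.Quotient.mk u) w = 0
      rw [hA, Submodule.liftQ_apply, hωVapp]
      exact hu (w : S) hw
  · -- part (iii)
    set M : Submodule K (↥V ⧸ Vq) := (W.comap V.subtype).map Vq.mkQ with hM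
    set N : Submodule K (↥V ⧸ Vq) :=
      ((omegaOrthSub ω W).comap V.subtype).map Vq.mkQ with hN
    set ι : ↥W →ₗ[K] ↥V := Submodule.inclusion hWV with hι
    have hmem : ∀ w : ↥W, Vq.mkQ (ι w) ∈ M := by
      intro w
      exact ⟨ι w, w.2, rfl⟩
    set φ : ↥W →ₗ[K] ↥M := (Vq.mkQ ∘ₗ ι).codRestrict M hmem with hφ
    set φ2 : ↥W →ₗ[K] ↥M ⧸ N.comap M.subtype := (N.comap M.subtype).mkQ ∘ₗ φ with hφ2
    have hker : (omegaOrthSub ω W).comap W.subtype ≤ LinearMap.ker φ2 := by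
      intro w hw
      show (N.comap M.subtype).mkQ (φ w) = 0
      rw [Submodule.mkQ_apply, Submodule.Quotient.mk_eq_zero]
      exact ⟨ι w, hw, rfl⟩
    set ebar : (↥W ⧸ (omegaOrthSub ω W).comap W.subtype) →ₗ[K] _ :=
      Submodule.liftQ _ φ2 hker with hebar
    have hinj : Function.Injective ebar := by
      rw [← LinearMap.ker_eq_bot, Submodule.eq_bot_iff]
      intro q hq
      obtain ⟨w, rfl⟩ := Submodule.Quotient.mk_surjective _ q
      have : φ2 w = 0 := hq
      rw [hφ2, LinearMap.comp_apply, Submodule.mkQ_apply,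
        Submodule.Quotient.mk_eq_zero] at this
      obtain ⟨u, hu, huw⟩ := this
      -- huw : Vq.mkQ u = (φ w : ↥V ⧸ Vq)
      have huw' : Vq.mkQ u = Vq.mkQ (ι w) := huw
      have hdiff : ι w - u ∈ Vq := by
        rw [← Submodule.Quotient.eq]
        exact huw'.symm
      rw [Submodule.Quotient.mk_eq_zero]
      show (w : S) ∈ omegaOrthSub ω W
      have h1 : ((ι w - u : ↥V) : S) ∈ omegaOrthSub ω W := hVpWp hdiff
      have h2 : ((ι w - u : ↥V) : S) = (w : S) - (u : S) := rfl
      have := (omegaOrthSub ω W).add_mem h1 hu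
      rw [h2] at this
      simpa using this
    have hsurj : Function.Surjective ebar := by
      intro q
      obtain ⟨m, rfl⟩ := Submodule.Quotient.mk_surjective _ q
      obtain ⟨v, hv, hvm⟩ := m.2
      refine ⟨Submodule.Quotient.mk (⟨(v : S), hv⟩ : ↥W), ?_⟩
      show φ2 _ = _
      rw [hφ2, LinearMap.comp_apply, Submodule.mkQ_apply]
      congr 1
      apply Subtype.ext
      show Vq.mkQ (ι ⟨(v : S), hv⟩) = (m : ↥V ⧸ Vq)
      rw [← hvm]
      rfl
    refine ⟨LinearEquiv.ofBijective ebar ⟨hinj, hsurj⟩, ?_⟩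
    intro w
    show ebar (Submodule.Quotient.mk w) = _
    rw [hebar, Submodule.liftQ_apply]
    rfl
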